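/- Lossless (in particular sufficient) summaries attain the maximal mutual information: in the setting of a joint density p(z,θ) of data and parameters and a joint density q(s,θ) of the summary T(z) and parameters, if the conditional posterior densities satisfy f(θ|z) = h(θ|T z) for (μ₀⊗λ)-almost every (z,θ) with p(z,θ) > 0, then ∫∫ q(s,θ) log( q(s,θ)/(π(θ) m_S(s)) ) d(ν⊗λ) = ∫∫ p(z,θ) log( p(z,θ)/(π(θ) m_Z(z)) ) d(μ₀⊗λ), i.e. I(θ; T(z)) = I(θ; z). -/

import Mathlib

open MeasureTheory Real

/-- Lossless (in particular sufficient) summaries attain the maximal mutual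
information: if the posterior given the summary `T z` agrees with the posterior
given the full data `z` (almost everywhere on the support of the joint density),
then `I(θ; T z) = I(θ; z)`. -/
theorem lossless_summaries_attain_max_mutual_info
    {Z Θ S : Type*} [MeasurableSpace Z] [MeasurableSpace Θ] [MeasurableSpace S]
    (μ₀ : Measure Z) (lam : Measure Θ) (ν : Measure S)
    [SigmaFinite μ₀] [SigmaFinite lam] [SigmaFinite ν]
    (p : Z × Θ → ℝ) (hp_meas : Measurable p) (hp_nonneg : ∀ x, 0 ≤ p x)
    (hp_one : ∫ x, p x ∂(μ₀.prod lam) = 1)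
    (T : Z → S) (hT : Measurable T)
    (q : S × Θ → ℝ) (hq_meas : Measurable q) (hq_nonneg : ∀ y, 0 ≤ q y)
    (hq : ∀ g : S × Θ → ℝ, Measurable g → (∃ C, ∀ y, |g y| ≤ C) →
      ∫ x, p x * g (T x.1, x.2) ∂(μ₀.prod lam) = ∫ y, q y * g y ∂(ν.prod lam))
    (mZ : Z → ℝ) (hmZ : ∀ z, mZ z = ∫ θ, p (z, θ) ∂lam)
    (mS : S → ℝ) (hmS : ∀ s, mS s = ∫ θ, q (s, θ) ∂lam)
    (prior : Θ → ℝ) (hprior : ∀ θ, prior θ = ∫ z, p (z, θ) ∂μ₀)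
    (hpos_p : ∀ᵐ x ∂(μ₀.prod lam), 0 < p x → 0 < mZ x.1 ∧ 0 < mS (T x.1))
    (hpos_q : ∀ᵐ y ∂(ν.prod lam), 0 < q y → 0 < mS y.1)
    -- integrability of all entropy integrands
    (hp1 : Integrable (fun x => p x * log (p x)) (μ₀.prod lam))
    (hp2 : Integrable (fun x => p x * log (mZ x.1)) (μ₀.prod lam))
    (hp3 : Integrable (fun x => p x * log (prior x.2)) (μ₀.prod lam))
    (hq1 : Integrable (fun y => q y * log (q y)) (ν.prod lam))
    (hq2 : Integrable (fun y => q y * log (mS y.1)) (ν.prod lam))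
    (hq3 : Integrable (fun y => q y * log (prior y.2)) (ν.prod lam))
    -- losslessness: the two conditional posterior densities agree a.e. on the support
    (hlossless : ∀ᵐ x ∂(μ₀.prod lam), 0 < p x →
      p x / mZ x.1 = q (T x.1, x.2) / mS (T x.1)) :
    ∫ y, q y * log (q y / (prior y.2 * mS y.1)) ∂(ν.prod lam)
      = ∫ x, p x * log (p x / (prior x.2 * mZ x.1)) ∂(μ₀.prod lam) := by
  -- measurability of the marginals
  have hprior_meas : Measurable prior := by
    have h : prior = fun θ => ∫ z, p (z, θ) ∂μ₀ := funext hprior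
    rw [h]
    exact hp_meas.stronglyMeasurable.integral_prod_left'.measurable
  have hmS_meas : Measurable mS := by
    have h : mS = fun s => ∫ θ, q (s, θ) ∂lam := funext hmS
    rw [h]
    exact hq_meas.stronglyMeasurable.integral_prod_right'.measurable
  have hprior_nonneg : ∀ θ, 0 ≤ prior θ := fun θ => by
    rw [hprior]; exact integral_nonneg fun z => hp_nonneg _
  -- p and q are integrable
  have hp_int : Integrable p (μ₀.prod lam) := by
    by_contra h
    rw [integral_undef h] at hp_one
    exact one_ne_zero hp_one.symm
  -- the indicator of the null set of the prior
  set A : Set Θ := {θ | prior θ = 0} with hA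
  have hA_meas : MeasurableSet A := hprior_meas (measurableSet_singleton (0 : ℝ))
  set χ : Θ → ℝ := A.indicator (fun _ => 1) with hχ
  have hχ_meas : Measurable χ := measurable_const.indicator hA_meas
  have hχ_nonneg : ∀ θ, 0 ≤ χ θ := fun θ => Set.indicator_nonneg (fun _ _ => zero_le_one) θ
  have hχ_bdd : ∀ θ, |χ θ| ≤ 1 := fun θ => by
    by_cases h : θ ∈ A <;>
      simp [hχ, Set.indicator_of_mem, Set.indicator_of_notMem, h]
  have hχ_one : ∀ θ, prior θ = 0 → χ θ = 1 := fun θ h => by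
    have hm : θ ∈ A := h
    simp [hχ, Set.indicator_of_mem hm]
  have hχ_zero : ∀ θ, prior θ ≠ 0 → χ θ = 0 := fun θ h => by
    have hm : θ ∉ A := h
    simp [hχ, Set.indicator_of_notMem hm]
  -- ∫ p · χ = 0
  have hpχ_int : Integrable (fun x => p x * χ x.2) (μ₀.prod lam) := by
    have h := hp_int.bdd_mul (hχ_meas.comp measurable_snd).aestronglyMeasurable
      (c := 1) (Filter.Eventually.of_forall fun x => by simpa using hχ_bdd x.2)
    exact h.congr (Filter.Eventually.of_forall fun x => mul_comm _ _)
  have hpχ_zero : ∫ x, p x * χ x.2 ∂(μ₀.prod lam) = 0 := by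
    rw [integral_prod_symm _ hpχ_int]
    have h : ∀ θ, ∫ z, p (z, θ) * χ θ ∂μ₀ = 0 := by
      intro θ
      rw [integral_mul_const, ← hprior]
      by_cases h : prior θ = 0
      · simp [h]
      · simp [hχ_zero θ h]
    simp only [h, integral_zero]
  -- a.e. on {p > 0}, prior > 0
  have hp_prior_pos : ∀ᵐ x ∂(μ₀.prod lam), 0 < p x → 0 < prior x.2 := by
    have h0 := (integral_eq_zero_iff_of_nonneg
      (fun x => mul_nonneg (hp_nonneg x) (hχ_nonneg x.2)) hpχ_int).mp hpχ_zero
    filter_upwards [h0] with x hx hpx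
    simp only [Pi.zero_apply] at hx
    rcases lt_or_eq_of_le (hprior_nonneg x.2) with h | h
    · exact h
    · rw [hχ_one x.2 h.symm, mul_one] at hx
      exact absurd hx (ne_of_gt hpx)
  -- transfer to q: ∫ q · χ = 0
  have hqχ_zero : ∫ y, q y * χ y.2 ∂(ν.prod lam) = 0 := by
    rw [← hq (fun y => χ y.2) (hχ_meas.comp measurable_snd)
      ⟨1, fun y => hχ_bdd y.2⟩]
    exact hpχ_zero
  have hq_one : ∫ y, q y ∂(ν.prod lam) = 1 := by
    have h := hq (fun _ => 1) measurable_const ⟨1, fun y => by simp⟩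
    simpa [hp_one] using h.symm
  have hq_int : Integrable q (ν.prod lam) := by
    by_contra h
    rw [integral_undef h] at hq_one
    exact one_ne_zero hq_one.symm
  have hqχ_int : Integrable (fun y => q y * χ y.2) (ν.prod lam) := by
    have h := hq_int.bdd_mul (hχ_meas.comp measurable_snd).aestronglyMeasurable
      (c := 1) (Filter.Eventually.of_forall fun y => by simpa using hχ_bdd y.2)
    exact h.congr (Filter.Eventually.of_forall fun y => mul_comm _ _)
  have hq_prior_pos : ∀ᵐ y ∂(ν.prod lam), 0 < q y → 0 < prior y.2 := by
    have h0 := (integral_eq_zero_iff_of_nonneg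
      (fun y => mul_nonneg (hq_nonneg y) (hχ_nonneg y.2)) hqχ_int).mp hqχ_zero
    filter_upwards [h0] with y hy hqy
    simp only [Pi.zero_apply] at hy
    rcases lt_or_eq_of_le (hprior_nonneg y.2) with h | h
    · exact h
    · rw [hχ_one y.2 h.symm, mul_one] at hy
      exact absurd hy (ne_of_gt hqy)
  -- the log-ratio function
  set g : S × Θ → ℝ := fun y => log (q y / (prior y.2 * mS y.1)) with hg
  have hg_meas : Measurable g :=
    Real.measurable_log.comp (hq_meas.div
      ((hprior_meas.comp measurable_snd).mul (hmS_meas.comp measurable_fst)))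
  -- q * g equals the integrable combination a.e.
  have hqg_eq : ∀ᵐ y ∂(ν.prod lam),
      q y * g y = q y * log (q y) - q y * log (prior y.2) - q y * log (mS y.1) := by
    filter_upwards [hpos_q, hq_prior_pos] with y h1 h2
    rcases eq_or_lt_of_le (hq_nonneg y) with h | h
    · simp [hg, ← h]
    · have hmS := h1 h
      have hpr := h2 h
      simp only [hg]
      rw [log_div (ne_of_gt h) (mul_pos hpr hmS).ne', log_mul (ne_of_gt hpr) (ne_of_gt hmS)]
      ring
  have hqg_int : Integrable (fun y => q y * g y) (ν.prod lam) :=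
    ((hq1.sub hq3).sub hq2).congr (hqg_eq.mono fun y h => h.symm)
  -- p * log(p/(prior·mZ)) equals the integrable combination a.e.
  have hpl_eq : ∀ᵐ x ∂(μ₀.prod lam),
      p x * log (p x / (prior x.2 * mZ x.1))
        = p x * log (p x) - p x * log (prior x.2) - p x * log (mZ x.1) := by
    filter_upwards [hpos_p, hp_prior_pos] with x h1 h2
    rcases eq_or_lt_of_le (hp_nonneg x) with h | h
    · simp [← h]
    · have hmZ := (h1 h).1
      have hpr := h2 h
      rw [log_div (ne_of_gt h) (mul_pos hpr hmZ).ne', log_mul (ne_of_gt hpr) (ne_of_gt hmZ)]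
      ring
  have hpl_int : Integrable (fun x => p x * log (p x / (prior x.2 * mZ x.1))) (μ₀.prod lam) :=
    ((hp1.sub hp3).sub hp2).congr (hpl_eq.mono fun x h => h.symm)
  -- losslessness: p * log(p/(prior·mZ)) = p * g(T·) a.e.
  have hpg_eq : ∀ᵐ x ∂(μ₀.prod lam),
      p x * log (p x / (prior x.2 * mZ x.1)) = p x * g (T x.1, x.2) := by
    filter_upwards [hlossless] with x hx
    rcases eq_or_lt_of_le (hp_nonneg x) with h | h
    · simp [← h]
    · have e1 : p x / (prior x.2 * mZ x.1) = q (T x.1, x.2) / (prior x.2 * mS (T x.1)) := by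
        rw [mul_comm (prior x.2) (mZ x.1), ← div_div, hx h, div_div,
          mul_comm (mS (T x.1)) (prior x.2)]
      simp only [hg]
      rw [e1]
  have hpg_int : Integrable (fun x => p x * g (T x.1, x.2)) (μ₀.prod lam) :=
    hpl_int.congr hpg_eq
  -- truncations
  set gn : ℕ → S × Θ → ℝ := fun n y => max (min (g y) (n : ℝ)) (-(n : ℝ)) with hgn
  have hgn_meas : ∀ n, Measurable (gn n) := fun n =>
    (hg_meas.min measurable_const).max measurable_const
  have hgn_bdd : ∀ n, ∀ y, |gn n y| ≤ (n : ℝ) := by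
    intro n y
    rw [abs_le]
    constructor
    · exact le_max_right _ _
    · exact max_le ((min_le_right _ _)) (neg_le_self (Nat.cast_nonneg n))
  have hgn_le : ∀ n, ∀ y, |gn n y| ≤ |g y| := by
    intro n y
    rw [abs_le]
    constructor
    · exact le_max_of_le_left (le_min (neg_abs_le _)
        (le_trans (neg_nonpos_of_nonneg (abs_nonneg _)) (Nat.cast_nonneg n)))
    · exact max_le (le_trans (min_le_left _ _) (le_abs_self _))
        (le_trans (neg_nonpos_of_nonneg (Nat.cast_nonneg n)) (abs_nonneg _))
  have hgn_tendsto : ∀ y, Filter.Tendsto (fun n => gn n y) Filter.atTop (nhds (g y)) := by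
    intro y
    have hev : ∀ᶠ n in Filter.atTop, gn n y = g y := by
      filter_upwards [Filter.eventually_ge_atTop ⌈|g y|⌉₊] with n hn
      have hn' : |g y| ≤ (n : ℝ) := (Nat.le_ceil _).trans (Nat.cast_le.mpr hn)
      simp only [hgn]
      rw [min_eq_left ((le_abs_self _).trans hn'),
        max_eq_left (le_trans (neg_le_neg hn') (neg_abs_le _))]
    exact Filter.Tendsto.congr' (hev.mono fun n h => h.symm) tendsto_const_nhds
  -- dominated convergence on the q side
  have hq_tendsto : Filter.Tendsto (fun n => ∫ y, q y * gn n y ∂(ν.prod lam))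
      Filter.atTop (nhds (∫ y, q y * g y ∂(ν.prod lam))) := by
    refine tendsto_integral_of_dominated_convergence (fun y => |q y * g y|)
      (fun n => (hq_meas.mul (hgn_meas n)).aestronglyMeasurable) hqg_int.abs
      (fun n => Filter.Eventually.of_forall fun y => ?_)
      (Filter.Eventually.of_forall fun y => (hgn_tendsto y).const_mul _)
    simp only [Real.norm_eq_abs, abs_mul]
    exact mul_le_mul_of_nonneg_left (hgn_le n y) (abs_nonneg _)
  -- dominated convergence on the p side
  have hp_tendsto : Filter.Tendsto (fun n => ∫ x, p x * gn n (T x.1, x.2) ∂(μ₀.prod lam))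
      Filter.atTop (nhds (∫ x, p x * g (T x.1, x.2) ∂(μ₀.prod lam))) := by
    refine tendsto_integral_of_dominated_convergence (fun x => |p x * g (T x.1, x.2)|)
      (fun n => (hp_meas.mul ((hgn_meas n).comp
        ((hT.comp measurable_fst).prodMk measurable_snd))).aestronglyMeasurable)
      hpg_int.abs
      (fun n => Filter.Eventually.of_forall fun x => ?_)
      (Filter.Eventually.of_forall fun x => (hgn_tendsto _).const_mul _)
    simp only [Real.norm_eq_abs, abs_mul]
    exact mul_le_mul_of_nonneg_left (hgn_le n _) (abs_nonneg _)
  -- each truncated integral transfers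
  have hstep : ∀ n, ∫ x, p x * gn n (T x.1, x.2) ∂(μ₀.prod lam)
      = ∫ y, q y * gn n y ∂(ν.prod lam) := fun n =>
    hq (gn n) (hgn_meas n) ⟨n, hgn_bdd n⟩
  have hq_tendsto' : Filter.Tendsto (fun n => ∫ x, p x * gn n (T x.1, x.2) ∂(μ₀.prod lam))
      Filter.atTop (nhds (∫ y, q y * g y ∂(ν.prod lam))) := by
    refine hq_tendsto.congr fun n => (hstep n).symm
  have hkey : ∫ y, q y * g y ∂(ν.prod lam) = ∫ x, p x * g (T x.1, x.2) ∂(μ₀.prod lam) :=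
    tendsto_nhds_unique hq_tendsto' hp_tendsto
  calc ∫ y, q y * log (q y / (prior y.2 * mS y.1)) ∂(ν.prod lam)
      = ∫ y, q y * g y ∂(ν.prod lam) := rfl
    _ = ∫ x, p x * g (T x.1, x.2) ∂(μ₀.prod lam) := hkey
    _ = ∫ x, p x * log (p x / (prior x.2 * mZ x.1)) ∂(μ₀.prod lam) :=
        integral_congr_ae (hpg_eq.mono fun x h => h.symm)
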